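/- For every real π with 0 ≤ π ≤ 1, (1 − π)/(4 − 3.627·π) + h₂( 1/(24 − 21.762·π) ) < 1. -/

import Mathlib

/-- The binary entropy function `h₂(p) = −p·log₂ p − (1−p)·log₂(1−p)`
(with the conventions `h₂ 0 = h₂ 1 = 0`, automatic since `Real.logb 2 0 = 0`). -/
noncomputable def h2 (p : ℝ) : ℝ := -p * Real.logb 2 p - (1 - p) * Real.logb 2 (1 - p)

private lemma aux1 : ∀ x ∈ Set.Ico (0:ℝ) 1,
    0 ≤ Real.log (1+x) - Real.log (1-x) - (2*x + 2/3*x^3 - x^4) := by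
  set f : ℝ → ℝ := fun y => Real.log (1+y) - Real.log (1-y) - (2*y + 2/3*y^3 - y^4) with hf
  have hderiv : ∀ y ∈ Set.Ioo (0:ℝ) 1,
      HasDerivAt f (1/(1+y) + 1/(1-y) - (2 + 2*y^2 - 4*y^3)) y := by
    intro y hy
    obtain ⟨hy0, hy1⟩ := hy
    have h1 : (0:ℝ) < 1 + y := by linarith
    have h2 : (0:ℝ) < 1 - y := by linarith
    have d1 : HasDerivAt (fun z : ℝ => Real.log (1+z)) (1/(1+y)) y := by
      have := (Real.hasDerivAt_log h1.ne').comp y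
        (((hasDerivAt_id y).const_add 1))
      exact this.congr_deriv (by simp)
    have d2 : HasDerivAt (fun z : ℝ => Real.log (1-z)) (-(1/(1-y))) y := by
      have := (Real.hasDerivAt_log h2.ne').comp y
        (((hasDerivAt_id y).neg.const_add 1))
      exact this.congr_deriv (by simp)
    have d3 : HasDerivAt (fun z : ℝ => 2*z + 2/3*z^3 - z^4)
        (2 + 2*y^2 - 4*y^3) y := by
      have p1 : HasDerivAt (fun z : ℝ => z^3) (3*y^2) y := by
        simpa using hasDerivAt_pow 3 y
      have p2 : HasDerivAt (fun z : ℝ => z^4) (4*y^3) y := by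
        simpa using hasDerivAt_pow 4 y
      have := (((hasDerivAt_id y).const_mul 2).add (p1.const_mul (2/3))).sub p2
      exact this.congr_deriv (by ring)
    exact ((d1.sub d2).sub d3).congr_deriv (by ring)
  have hcont : ContinuousOn f (Set.Ico 0 1) := by
    apply ContinuousOn.sub
    apply ContinuousOn.sub
    · exact ContinuousOn.log (by fun_prop) (fun x hx => by
        have := hx.1; dsimp at this ⊢; intro h; simp at hx; linarith)
    · exact ContinuousOn.log (by fun_prop) (fun x hx => by
        simp at hx; intro h; linarith [hx.2])
    · fun_prop
  have hmono : MonotoneOn f (Set.Ico 0 1) := by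
    apply monotoneOn_of_deriv_nonneg (convex_Ico 0 1) hcont
    · rw [interior_Ico]
      intro y hy
      exact ((hderiv y hy).differentiableAt).differentiableWithinAt
    · rw [interior_Ico]
      intro y hy
      rw [(hderiv y hy).deriv]
      obtain ⟨hy0, hy1⟩ := hy
      have h1 : (0:ℝ) < 1 + y := by linarith
      have h2 : (0:ℝ) < 1 - y := by linarith
      have hprod : (0:ℝ) < (1+y)*(1-y) := mul_pos h1 h2
      have key : (2 + 2*y^2 - 4*y^3) * ((1+y)*(1-y)) ≤ 2 := by
        nlinarith [mul_nonneg (mul_nonneg (pow_nonneg hy0.le 3) h2.le)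
          (by linarith : (0:ℝ) ≤ 1 + y), pow_nonneg hy0.le 4]
      have e : 1/(1+y) + 1/(1-y) = 2/((1+y)*(1-y)) := by
        field_simp
        ring
      rw [e]
      rw [sub_nonneg, le_div_iff₀ hprod]
      linarith
  intro x hx
  have h0 : (0:ℝ) ∈ Set.Ico (0:ℝ) 1 := by constructor <;> norm_num
  have := hmono h0 hx hx.1
  simpa [hf] using this

private lemma aux2 (u : ℝ) (h0 : 0 ≤ u) (h1 : u < 1) :
    u^2 + u^4/6 - u^5/5 ≤ (1+u)*Real.log (1+u) + (1-u)*Real.log (1-u) := by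
  set f : ℝ → ℝ := fun y => (1+y)*Real.log (1+y) + (1-y)*Real.log (1-y)
    - (y^2 + y^4/6 - y^5/5) with hf
  have hderiv : ∀ y ∈ Set.Ioo (0:ℝ) 1,
      HasDerivAt f (Real.log (1+y) - Real.log (1-y) - (2*y + 2/3*y^3 - y^4)) y := by
    intro y hy
    obtain ⟨hy0, hy1⟩ := hy
    have h1' : (0:ℝ) < 1 + y := by linarith
    have h2' : (0:ℝ) < 1 - y := by linarith
    have d1 : HasDerivAt (fun z : ℝ => Real.log (1+z)) (1/(1+y)) y := by
      have := (Real.hasDerivAt_log h1'.ne').comp y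
        (((hasDerivAt_id y).const_add 1))
      exact this.congr_deriv (by simp)
    have d2 : HasDerivAt (fun z : ℝ => Real.log (1-z)) (-(1/(1-y))) y := by
      have := (Real.hasDerivAt_log h2'.ne').comp y
        (((hasDerivAt_id y).neg.const_add 1))
      exact this.congr_deriv (by simp)
    have m1 : HasDerivAt (fun z : ℝ => (1+z)*Real.log (1+z))
        (1*Real.log (1+y) + (1+y)*(1/(1+y))) y :=
      (((hasDerivAt_id y).const_add 1)).mul d1
    have m2 : HasDerivAt (fun z : ℝ => (1-z)*Real.log (1-z))
        ((-1)*Real.log (1-y) + (1-y)*(-(1/(1-y)))) y := by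
      have := (((hasDerivAt_id y).neg.const_add 1)).mul d2
      exact this.congr_deriv (by simp [sub_eq_add_neg])
    have d3 : HasDerivAt (fun z : ℝ => z^2 + z^4/6 - z^5/5)
        (2*y + 2/3*y^3 - y^4) y := by
      have p1 : HasDerivAt (fun z : ℝ => z^2) (2*y) y := by
        simpa using hasDerivAt_pow 2 y
      have p2 : HasDerivAt (fun z : ℝ => z^4) (4*y^3) y := by
        simpa using hasDerivAt_pow 4 y
      have p3 : HasDerivAt (fun z : ℝ => z^5) (5*y^4) y := by
        simpa using hasDerivAt_pow 5 y
      have := (p1.add (p2.div_const 6)).sub (p3.div_const 5)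
      exact this.congr_deriv (by ring)
    have := (m1.add m2).sub d3
    refine this.congr_deriv ?_
    have e1 : (1+y)*(1/(1+y)) = 1 := by field_simp
    have e2 : (1-y)*(-(1/(1-y))) = -1 := by field_simp
    rw [e1, e2]
    ring
  have hcont : ContinuousOn f (Set.Ico 0 1) := by
    apply ContinuousOn.sub
    apply ContinuousOn.add
    · exact ContinuousOn.mul (by fun_prop)
        (ContinuousOn.log (by fun_prop) (fun x hx => by simp at hx; intro h; linarith [hx.1]))
    · exact ContinuousOn.mul (by fun_prop)
        (ContinuousOn.log (by fun_prop) (fun x hx => by simp at hx; intro h; linarith [hx.2]))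
    · fun_prop
  have hmono : MonotoneOn f (Set.Ico 0 1) := by
    apply monotoneOn_of_deriv_nonneg (convex_Ico 0 1) hcont
    · rw [interior_Ico]
      intro y hy
      exact ((hderiv y hy).differentiableAt).differentiableWithinAt
    · rw [interior_Ico]
      intro y hy
      rw [(hderiv y hy).deriv]
      exact aux1 y ⟨hy.1.le, hy.2⟩
  have h0' : (0:ℝ) ∈ Set.Ico (0:ℝ) 1 := by constructor <;> norm_num
  have := hmono h0' ⟨h0, h1⟩ h0
  simp only [hf] at this
  simp at this
  linarith

/-- h2 upper bound for p ∈ (0, 1/2). -/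
private lemma h2_le (p : ℝ) (hp0 : 0 < p) (hp1 : p < 1/2) :
    h2 p ≤ 1 - ((1-2*p)^2 + (1-2*p)^4/6 - (1-2*p)^5/5)/(2*Real.log 2) := by
  set u : ℝ := 1 - 2*p with hu
  have hu0 : 0 ≤ u := by simp [hu]; linarith
  have hu1 : u < 1 := by simp [hu]; linarith
  have hlog2 : 0 < Real.log 2 := Real.log_pos (by norm_num)
  have hid : h2 p = 1 - ((1+u)*Real.log (1+u) + (1-u)*Real.log (1-u))/(2*Real.log 2) := by
    have e1 : 1 + u = 2*(1-p) := by rw [hu]; ring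
    have e2 : 1 - u = 2*p := by rw [hu]; ring
    have l1 : Real.log (2*(1-p)) = Real.log 2 + Real.log (1-p) :=
      Real.log_mul two_ne_zero (by linarith)
    have l2 : Real.log (2*p) = Real.log 2 + Real.log p :=
      Real.log_mul two_ne_zero hp0.ne'
    rw [e1, e2, l1, l2]
    unfold h2
    rw [Real.logb, Real.logb]
    field_simp
    ring
  rw [hid]
  have hS := aux2 u hu0 hu1
  have : ((1-2*p)^2 + (1-2*p)^4/6 - (1-2*p)^5/5)/(2*Real.log 2)
      ≤ ((1+u)*Real.log (1+u) + (1-u)*Real.log (1-u))/(2*Real.log 2) := by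
    gcongr
  linarith

set_option maxHeartbeats 1600000 in
/-- For every π ∈ [0,1], (1 − π)/(4 − 3.627·π) + h₂(1/(24 − 21.762·π)) < 1. -/
theorem stmt3 (π : ℝ) (hπ : π ∈ Set.Icc (0:ℝ) 1) :
    (1 - π) / (4 - 3.627 * π) + h2 (1 / (24 - 21.762 * π)) < 1 := by
  obtain ⟨hπ0, hπ1⟩ := hπ
  have hD : (2.238:ℝ) ≤ 24 - 21.762*π := by nlinarith
  have hDpos : (0:ℝ) < 24 - 21.762*π := by linarith
  set p : ℝ := 1 / (24 - 21.762 * π) with hp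
  have hp0 : 0 < p := by positivity
  have hp1 : p < 1/2 := by
    rw [hp, div_lt_div_iff₀ hDpos (by norm_num)]
    linarith
  have hbound := h2_le p hp0 hp1
  have hlog2 : 0 < Real.log 2 := Real.log_pos (by norm_num)
  have hlogub : Real.log 2 < 0.6931472 := by
    have := Real.log_two_lt_d9
    norm_num at this ⊢
    linarith
  -- It suffices to show the first term is less than the entropy deficit.
  have main : (1 - π) / (4 - 3.627 * π)
      < ((1-2*p)^2 + (1-2*p)^4/6 - (1-2*p)^5/5)/(2*Real.log 2) := by
    have hden : (0:ℝ) < 4 - 3.627*π := by nlinarith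
    have hu : 1 - 2*p = (22 - 21.762*π) / (24 - 21.762*π) := by
      rw [hp]
      field_simp
      ring
    rw [hu, div_lt_div_iff₀ hden (by positivity)]
    set D : ℝ := 24 - 21.762*π with hDdef
    have hexp : ((22 - 21.762*π)/D)^2 + ((22 - 21.762*π)/D)^4/6 - ((22 - 21.762*π)/D)^5/5
        = (30*(22 - 21.762*π)^2*D^3 + 5*(22 - 21.762*π)^4*D - 6*(22 - 21.762*π)^5)/(30*D^5) := by
      field_simp
      ring
    rw [hexp, div_mul_eq_mul_div, lt_div_iff₀ (by positivity)]
    -- Now a polynomial inequality in π (plus the bound on log 2).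
    have step : (1 - π) * (2 * Real.log 2) * (30*D^5)
        ≤ (1 - π) * (2 * (0.6931472:ℝ)) * (30*D^5) := by
      have h1 : (0:ℝ) ≤ 1 - π := by linarith
      have h2 : (0:ℝ) ≤ 30*D^5 := by positivity
      nlinarith [mul_nonneg (mul_nonneg h1 h2) (by linarith : (0:ℝ) ≤ 0.6931472 - Real.log 2)]
    refine lt_of_le_of_lt step ?_
    rw [hDdef]
    set t : ℝ := 1 - π with htdef
    have ht0 : (0:ℝ) ≤ t := by simp [htdef]; linarith
    have ht1 : t ≤ 1 := by simp [htdef]; linarith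
    have hπt : π = 1 - t := by simp [htdef]
    rw [hπt]
    have c0 : (0:ℝ) ≤ (t - 687/50000)^2 := sq_nonneg _
    have c1 : (0:ℝ) ≤ (t - 687/50000)^2 * t := mul_nonneg c0 ht0
    have c2 : (0:ℝ) ≤ (t - 687/50000)^2 * t^2 := mul_nonneg c0 (pow_nonneg ht0 2)
    have c3 : (0:ℝ) ≤ (t - 687/50000)^2 * t^3 := mul_nonneg c0 (pow_nonneg ht0 3)
    have c4 : (0:ℝ) ≤ (t - 687/50000)^2 * t^4 := mul_nonneg c0 (pow_nonneg ht0 4)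
    linarith [c0, c1, c2, c3, c4, ht0]
  linarith
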